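/- arXiv:2112.11448 — 5 statements merged into one kernel-verified Lean document; each statement's English description precedes it below -/
import Mathlib

section
/- Under the moving-mesh advection update with μ + μ̄ ≥ 1 (and μ ∈ (0,1), μ̄ ∈ [0,1)), the total mass is conserved up to fluxes: Σ_{j=0}^{N} φ'_j = Σ_{j=0}^{N} φ_j + φ_in − φ_out, where φ_out = μ' φ_{N−1} + φ_N and μ' = μ + μ̄ − 1. -/
/-- Mass conservation up to fluxes for the moving-mesh advection update in the
wrap case `μ + μ̄ ≥ 1` (with `μ ∈ (0,1)`, `μ̄ ∈ [0,1)`):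
`Σ_{j=0}^{N} φ'_j = Σ_{j=0}^{N} φ_j + φ_in − φ_out` with
`φ_out = μ' φ_{N−1} + φ_N` and `μ' = μ + μ̄ − 1`. -/
theorem moving_mesh_mass_balance_wrap
    (N : ℕ) (hN : 2 ≤ N) (μ μbar μ' φin φout : ℝ) (φ φ' : ℕ → ℝ)
    (hμ0 : 0 < μ) (hμ1 : μ < 1) (hμbar : μbar ∈ Set.Ico (0:ℝ) 1)
    (hge : 1 ≤ μ + μbar)
    (hμ' : μ' = μ + μbar - 1)
    (hout : φout = μ' * φ (N - 1) + φ N)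
    (h0 : φ' 0 = (μ' / μ) * φin)
    (h1 : φ' 1 = φ 0 + (1 - μ' / μ) * φin)
    (hmid : ∀ j, 2 ≤ j → j ≤ N - 1 → φ' j = φ (j - 1))
    (hend : φ' N = (1 - μ') * φ (N - 1)) :
    ∑ j ∈ Finset.range (N + 1), φ' j =
      (∑ j ∈ Finset.range (N + 1), φ j) + φin - φout := by
  obtain ⟨K, rfl⟩ : ∃ K, N = K + 2 := ⟨N - 2, by omega⟩
  have hL : ∑ j ∈ Finset.range (K + 2 + 1), φ' j
      = (∑ j ∈ Finset.range K, φ' (j + 2)) + φ' 1 + φ' 0 + φ' (K + 2) := by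
    rw [Finset.sum_range_succ, Finset.sum_range_succ' _ (K + 1),
      Finset.sum_range_succ' (fun i => φ' (i + 1)) K]
  have hR : ∑ j ∈ Finset.range (K + 2 + 1), φ j
      = (∑ j ∈ Finset.range K, φ (j + 1)) + φ 0 + φ (K + 1) + φ (K + 2) := by
    rw [Finset.sum_range_succ, Finset.sum_range_succ,
      Finset.sum_range_succ' _ K]
  have hS : ∑ j ∈ Finset.range K, φ' (j + 2) = ∑ j ∈ Finset.range K, φ (j + 1) := by
    refine Finset.sum_congr rfl fun j hj => ?_
    have hj' := Finset.mem_range.mp hj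
    have := hmid (j + 2) (by omega) (by omega)
    simpa using this
  have hN1 : K + 2 - 1 = K + 1 := rfl
  rw [hL, hR, hS, h0, h1, hend, hout, hN1]
  have hμne : μ ≠ 0 := ne_of_gt hμ0
  field_simp
  ring
end

section
/- The moving-mesh advection update with zero influx is exact for piecewise-constant data: fix N ≥ 2, Δa = 1/N, μ ∈ [0,1), μ̄ ∈ [0,1) (with μ > 0 if μ + μ̄ ≥ 1), and φ ∈ ℝ^{N+1}. Let φ̃ : ℝ → ℝ be the function that is constant on each mesh cell C_{μ,j} with ∫_{C_{μ,j}} φ̃ = φ_j (for every cell of positive length) and φ̃ = 0 outside [0,1], and let ψ(a) = φ̃(a − μ̄ Δa) be its exact translate. Then the update with φ_in = 0 satisfies φ'_j = ∫_{C_{μ',j}} ψ(a) da for every j = 0,…,N, and φ_out = ∫_{1}^{∞} ψ(a) da. -/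
/-- Lower endpoint of mesh cell `C_{μ,j}` (cell width `Δa = 1/N`, reference
points `a_j = j/N`): `C_{μ,0} = [0, μΔa]`, `C_{μ,j} = [(j−1+μ)Δa, (j+μ)Δa]`
for `1 ≤ j ≤ N−1`, `C_{μ,N} = [(N−1+μ)Δa, 1]`. -/
noncomputable def cellLo (N : ℕ) (μ : ℝ) (j : ℕ) : ℝ :=
  if j = 0 then 0 else ((j : ℝ) - 1 + μ) / N

/-- Upper endpoint of mesh cell `C_{μ,j}`. -/
noncomputable def cellHi (N : ℕ) (μ : ℝ) (j : ℕ) : ℝ :=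
  if j = N then 1 else ((j : ℝ) + μ) / N

open MeasureTheory Set

private lemma cellLo_zero (N : ℕ) (μ : ℝ) : cellLo N μ 0 = 0 := if_pos rfl
private lemma cellLo_ne (N : ℕ) (μ : ℝ) {j : ℕ} (h : j ≠ 0) :
    cellLo N μ j = ((j:ℝ) - 1 + μ) / N := if_neg h
private lemma cellHi_last (N : ℕ) (μ : ℝ) : cellHi N μ N = 1 := if_pos rfl
private lemma cellHi_ne (N : ℕ) (μ : ℝ) {j : ℕ} (h : j ≠ N) :
    cellHi N μ j = ((j:ℝ) + μ) / N := if_neg h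

private lemma ae_const_on {f : ℝ → ℝ} {c lo hi x y : ℝ}
    (h : ∀ a ∈ Set.Ioo lo hi, f a = c) (hx : lo ≤ x) (hy : y ≤ hi) :
    ∀ᵐ a : ℝ ∂volume, a ∈ Set.Ioc x y → f a = c := by
  have hny : ∀ᵐ a : ℝ ∂(volume : Measure ℝ), a ≠ y := by
    rw [MeasureTheory.ae_iff]
    simpa using measure_singleton (μ := (volume : Measure ℝ)) y
  filter_upwards [hny] with a hay hmem
  exact h a ⟨lt_of_le_of_lt hx hmem.1, lt_of_lt_of_le (lt_of_le_of_ne hmem.2 hay) hy⟩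

private lemma intconst {f : ℝ → ℝ} {c lo hi x y : ℝ}
    (h : ∀ a ∈ Set.Ioo lo hi, f a = c) (hx : lo ≤ x) (hxy : x ≤ y) (hy : y ≤ hi) :
    ∫ a in x..y, f a = c * (y - x) := by
  have hae : ∀ᵐ a : ℝ ∂volume, a ∈ Set.uIoc x y → f a = c := by
    rw [Set.uIoc_of_le hxy]; exact ae_const_on h hx hy
  rw [intervalIntegral.integral_congr_ae hae, intervalIntegral.integral_const,
    smul_eq_mul, mul_comm]

private lemma intintg {f : ℝ → ℝ} {c lo hi x y : ℝ}
    (h : ∀ a ∈ Set.Ioo lo hi, f a = c) (hx : lo ≤ x) (hxy : x ≤ y) (hy : y ≤ hi) :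
    IntervalIntegrable f volume x y := by
  have hae : f =ᵐ[volume.restrict (Set.Ioc x y)] fun _ => c :=
    (ae_restrict_iff' measurableSet_Ioc).mpr (ae_const_on h hx hy)
  refine ⟨?_, ?_⟩
  · exact ((MeasureTheory.integrableOn_const_iff (C := c)).mpr (Or.inr measure_Ioc_lt_top)).congr hae.symm
  · rw [Set.Ioc_eq_empty (not_lt.mpr hxy)]
    exact integrableOn_empty

private lemma intsplit {f : ℝ → ℝ} {c1 c2 lo1 hi1 lo2 hi2 x y z : ℝ}
    (h1 : ∀ a ∈ Set.Ioo lo1 hi1, f a = c1) (h2 : ∀ a ∈ Set.Ioo lo2 hi2, f a = c2)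
    (hx : lo1 ≤ x) (hxy : x ≤ y) (hy : y ≤ hi1)
    (hy2 : lo2 ≤ y) (hyz : y ≤ z) (hz : z ≤ hi2) :
    ∫ a in x..z, f a = c1 * (y - x) + c2 * (z - y) := by
  rw [← intervalIntegral.integral_add_adjacent_intervals (intintg h1 hx hxy hy)
      (intintg h2 hy2 hyz hz),
    intconst h1 hx hxy hy, intconst h2 hy2 hyz hz]

private lemma ioi_eq {f : ℝ → ℝ} {b B : ℝ} (hbB : b ≤ B)
    (hzero : ∀ a ∈ Set.Ioi B, f a = 0)
    (hint : MeasureTheory.IntegrableOn f (Set.Ioc b B) volume) :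
    ∫ a in Set.Ioi b, f a = ∫ a in b..B, f a := by
  have hint2 : MeasureTheory.IntegrableOn f (Set.Ioi B) volume :=
    (MeasureTheory.integrableOn_congr_fun hzero measurableSet_Ioi).mpr integrableOn_zero
  have h0 : ∫ a in Set.Ioi B, f a = 0 := by
    rw [MeasureTheory.setIntegral_congr_fun measurableSet_Ioi hzero]
    simp
  rw [← Set.Ioc_union_Ioi_eq_Ioi hbB,
    MeasureTheory.setIntegral_union (Set.Ioc_disjoint_Ioi le_rfl) measurableSet_Ioi hint hint2,
    h0, add_zero, intervalIntegral.integral_of_le hbB]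

private lemma cell_le (N : ℕ) (hN : 2 ≤ N) (μ : ℝ) (hμ0 : 0 ≤ μ) (hμ1 : μ < 1)
    (j : ℕ) (hj : j ≤ N) : cellLo N μ j ≤ cellHi N μ j := by
  have hN0 : (0:ℝ) < (N:ℝ) := by
    have : (2:ℝ) ≤ (N:ℝ) := by exact_mod_cast hN
    linarith
  have hjN : (j:ℝ) ≤ (N:ℝ) := by exact_mod_cast hj
  unfold cellLo cellHi
  split_ifs with h0 hN'
  · exact zero_le_one
  · subst h0
    apply div_nonneg _ hN0.le
    simp only [Nat.cast_zero, zero_add]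
    exact hμ0
  · rw [div_le_one hN0]
    linarith
  · exact (div_le_div_iff_of_pos_right hN0).mpr (by linarith)

/-- Exactness of the moving-mesh advection update with zero influx for
piecewise-constant data: if `φ̃` is constant on each mesh cell `C_{μ,j}` with
`∫_{C_{μ,j}} φ̃ = φ_j`, and `φ̃ = 0` outside `[0,1]`, and `ψ(a) = φ̃(a − μ̄Δa)`
is the exact translate, then the updated state satisfies
`φ'_j = ∫_{C_{μ',j}} ψ` for every `j`, and `φ_out = ∫_1^∞ ψ`. -/
theorem moving_mesh_update_exact
    (N : ℕ) (hN : 2 ≤ N) (μ μbar μ' φout : ℝ) (φ φ' : ℕ → ℝ)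
    (φtil ψ : ℝ → ℝ)
    (hμ : μ ∈ Set.Ico (0:ℝ) 1) (hμbar : μbar ∈ Set.Ico (0:ℝ) 1)
    (hμpos : 1 ≤ μ + μbar → 0 < μ)
    (hμ' : μ' = if μ + μbar < 1 then μ + μbar else μ + μbar - 1)
    (hout : φout = if μ + μbar < 1 then (μbar / (1 - μ)) * φ N
      else (μ + μbar - 1) * φ (N - 1) + φ N)
    (hupd : ∀ j ≤ N, φ' j =
      if μ + μbar < 1 then
        (if j = 0 then φ 0 + 0 else if j = N then φ N - φout else φ j)
      else
        (if j = 0 then (μ' / μ) * 0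
         else if j = 1 then φ 0 + (1 - μ' / μ) * 0
         else if j = N then (1 - μ') * φ (N - 1)
         else φ (j - 1)))
    (hconst : ∀ j ≤ N, ∃ c : ℝ,
      ∀ a ∈ Set.Ioo (cellLo N μ j) (cellHi N μ j), φtil a = c)
    (hint : ∀ j ≤ N, ∫ a in (cellLo N μ j)..(cellHi N μ j), φtil a = φ j)
    (hzero : ∀ a : ℝ, a ∉ Set.Icc (0:ℝ) 1 → φtil a = 0)
    (hψ : ∀ a : ℝ, ψ a = φtil (a - μbar / N)) :
    (∀ j ≤ N, φ' j = ∫ a in (cellLo N μ' j)..(cellHi N μ' j), ψ a) ∧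
      φout = ∫ a in Set.Ioi (1:ℝ), ψ a := by
  obtain ⟨hμ0, hμ1⟩ := hμ
  obtain ⟨hb0, hb1⟩ := hμbar
  have hN2 : (2:ℝ) ≤ (N:ℝ) := by exact_mod_cast hN
  have hN0 : (0:ℝ) < (N:ℝ) := by linarith
  have hNR : (N:ℝ) ≠ 0 := ne_of_gt hN0
  have hNe0 : N ≠ 0 := by omega
  have h0N : (0:ℕ) ≠ N := by omega
  have hμ'01 : 0 ≤ μ' ∧ μ' < 1 := by
    rw [hμ']; split_ifs with h
    · exact ⟨by linarith, h⟩
    · exact ⟨by linarith, by linarith⟩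
  obtain ⟨hμ'0, hμ'1⟩ := hμ'01
  have hsnn : (0:ℝ) ≤ μbar / N := div_nonneg hb0 hN0.le
  have hψlo : ∀ a : ℝ, a < μbar / N → ψ a = 0 := by
    intro a ha
    rw [hψ]
    refine hzero _ (fun hc => ?_)
    rw [Set.mem_Icc] at hc
    linarith [hc.1]
  have hψhi : ∀ a : ℝ, 1 + μbar / N < a → ψ a = 0 := by
    intro a ha
    rw [hψ]
    refine hzero _ (fun hc => ?_)
    rw [Set.mem_Icc] at hc
    linarith [hc.2]
  have hψc : ∀ j, j ≤ N → ∃ c : ℝ,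
      (∀ a ∈ Set.Ioo (cellLo N μ j + μbar / N) (cellHi N μ j + μbar / N), ψ a = c) ∧
      c * (cellHi N μ j - cellLo N μ j) = φ j := by
    intro j hj
    obtain ⟨c, hc⟩ := hconst j hj
    have hle : cellLo N μ j ≤ cellHi N μ j := cell_le N hN μ hμ0 hμ1 j hj
    refine ⟨c, fun a ha => ?_, ?_⟩
    · rw [hψ]
      exact hc _ ⟨by linarith [ha.1], by linarith [ha.2]⟩
    · have h' := hint j hj
      rwa [intconst hc le_rfl hle le_rfl] at h'
  constructor
  · intro j hj
    rw [hupd j hj]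
    by_cases h1 : μ + μbar < 1
    · have hμ'' : μ' = μ + μbar := by rw [hμ', if_pos h1]
      rw [if_pos h1]
      by_cases hj0 : j = 0
      · subst hj0
        obtain ⟨c, hc, hr⟩ := hψc 0 (by omega)
        have hub : cellHi N μ' 0 = μ / N + μbar / N := by
          rw [cellHi_ne N μ' h0N, hμ'']
          push_cast
          ring
        rw [if_pos rfl, cellLo_zero, hub]
        have e1 : cellLo N μ 0 + μbar / N = μbar / N := by rw [cellLo_zero]; ring
        have e2 : cellHi N μ 0 + μbar / N = μ / N + μbar / N := by
          rw [cellHi_ne N μ h0N]; push_cast; ring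
        rw [e1, e2] at hc
        rw [cellLo_zero, cellHi_ne N μ h0N] at hr
        rw [intsplit (fun a ha => hψlo a ha.2) hc (by norm_num : (-1:ℝ) ≤ 0) hsnn
          le_rfl le_rfl (by linarith [div_nonneg hμ0 hN0.le]) le_rfl]
        push_cast at hr
        linear_combination (-1:ℝ) * hr
      · by_cases hjN : j = N
        · rw [if_neg hj0, if_pos hjN, hjN]
          obtain ⟨c, hc, hr⟩ := hψc N le_rfl
          rw [cellLo_ne N μ' hNe0, cellHi_last]
          have e1 : cellLo N μ N + μbar / N = ((N:ℝ) - 1 + μ') / N := by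
            rw [cellLo_ne N μ hNe0, hμ'']; ring
          have e2 : cellHi N μ N + μbar / N = 1 + μbar / N := by rw [cellHi_last]
          rw [e1, e2] at hc
          rw [cellLo_ne N μ hNe0, cellHi_last] at hr
          rw [intconst hc le_rfl (by rw [div_le_one hN0]; linarith)
            (by linarith : (1:ℝ) ≤ 1 + μbar / N)]
          rw [hout, if_pos h1]
          have h1μ : (1:ℝ) - μ ≠ 0 := ne_of_gt (by linarith)
          have hr' : c * ((1 - μ) / N) = φ N := by
            rw [← hr, show (1:ℝ) - ((N:ℝ) - 1 + μ) / N = (1 - μ) / N by field_simp; ring]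
          rw [hμ'', ← hr']
          field_simp
          ring
        · rw [if_neg hj0, if_neg hjN]
          obtain ⟨c, hc, hr⟩ := hψc j hj
          rw [cellLo_ne N μ' hj0, cellHi_ne N μ' hjN]
          have e1 : cellLo N μ j + μbar / N = ((j:ℝ) - 1 + μ') / N := by
            rw [cellLo_ne N μ hj0, hμ'']; ring
          have e2 : cellHi N μ j + μbar / N = ((j:ℝ) + μ') / N := by
            rw [cellHi_ne N μ hjN, hμ'']; ring
          rw [e1, e2] at hc
          rw [cellLo_ne N μ hj0, cellHi_ne N μ hjN] at hr
          rw [intconst hc le_rfl ((div_le_div_iff_of_pos_right hN0).mpr (by linarith)) le_rfl]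
          linear_combination (-1:ℝ) * hr
    · have hμ'' : μ' = μ + μbar - 1 := by rw [hμ', if_neg h1]
      have h1' : 1 ≤ μ + μbar := not_lt.mp h1
      rw [if_neg h1]
      by_cases hj0 : j = 0
      · subst hj0
        rw [if_pos rfl, cellLo_zero, cellHi_ne N μ' h0N]
        rw [intconst (fun (a:ℝ) (ha : a ∈ Set.Ioo (-1:ℝ) (μbar / N)) => hψlo a ha.2)
          (by norm_num : (-1:ℝ) ≤ 0)
          (div_nonneg (by push_cast; linarith) hN0.le)
          ((div_le_div_iff_of_pos_right hN0).mpr (by push_cast; rw [hμ'']; linarith))]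
        ring
      · by_cases hj1 : j = 1
        · subst hj1
          rw [if_neg hj0, if_pos rfl]
          obtain ⟨c, hc, hr⟩ := hψc 0 (by omega)
          rw [cellLo_ne N μ' hj0, cellHi_ne N μ' (by omega : (1:ℕ) ≠ N)]
          have e1 : cellLo N μ 0 + μbar / N = μbar / N := by rw [cellLo_zero]; ring
          have e2 : cellHi N μ 0 + μbar / N = ((1:ℕ) + μ') / N + (1 - μ - μbar + μ') / N := by
            rw [cellHi_ne N μ h0N, hμ'']; push_cast; ring
          have e2' : cellHi N μ 0 + μbar / N = (((1:ℕ):ℝ) + μ') / N := by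
            rw [e2, hμ'']; push_cast; ring
          rw [e1, e2'] at hc
          rw [cellLo_zero, cellHi_ne N μ h0N] at hr
          rw [intsplit (fun a ha => hψlo a ha.2) hc
            (by
              have : (0:ℝ) ≤ (((1:ℕ):ℝ) - 1 + μ') / N := div_nonneg (by push_cast; linarith) hN0.le
              linarith : (-1:ℝ) ≤ (((1:ℕ):ℝ) - 1 + μ') / N)
            ((div_le_div_iff_of_pos_right hN0).mpr (by push_cast; rw [hμ'']; linarith))
            le_rfl le_rfl
            ((div_le_div_iff_of_pos_right hN0).mpr (by push_cast; rw [hμ'']; linarith))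
            le_rfl]
          push_cast at hr ⊢
          rw [hμ'']
          linear_combination (-1:ℝ) * hr
        · by_cases hjN : j = N
          · rw [if_neg hj0, if_neg hj1, if_pos hjN, hjN]
            obtain ⟨c, hc, hr⟩ := hψc (N-1) (by omega)
            have hcast : ((N - 1 : ℕ) : ℝ) = (N:ℝ) - 1 := by
              rw [Nat.cast_sub (by omega), Nat.cast_one]
            rw [cellLo_ne N μ' hNe0, cellHi_last]
            have e1 : cellLo N μ (N-1) + μbar / N = ((N:ℝ) - 1 + μ') / N := by
              rw [cellLo_ne N μ (by omega : N - 1 ≠ 0), hcast, hμ'']; ring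
            have e2 : cellHi N μ (N-1) + μbar / N = ((N:ℝ) + μ') / N := by
              rw [cellHi_ne N μ (by omega : N - 1 ≠ N), hcast, hμ'']; ring
            rw [e1, e2] at hc
            rw [cellLo_ne N μ (by omega : N - 1 ≠ 0),
              cellHi_ne N μ (by omega : N - 1 ≠ N), hcast] at hr
            rw [intconst hc le_rfl (by rw [div_le_one hN0]; linarith)
              (by rw [le_div_iff₀ hN0]; linarith)]
            rw [show (1:ℝ) - ((N:ℝ) - 1 + μ') / N = (1 - μ') / N by field_simp; ring]
            linear_combination (μ' - 1) * hr
          · rw [if_neg hj0, if_neg hj1, if_neg hjN]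
            obtain ⟨c, hc, hr⟩ := hψc (j-1) (by omega)
            have hcast : ((j - 1 : ℕ) : ℝ) = (j:ℝ) - 1 := by
              rw [Nat.cast_sub (by omega), Nat.cast_one]
            rw [cellLo_ne N μ' hj0, cellHi_ne N μ' hjN]
            have e1 : cellLo N μ (j-1) + μbar / N = ((j:ℝ) - 1 + μ') / N := by
              rw [cellLo_ne N μ (by omega : j - 1 ≠ 0), hcast, hμ'']; ring
            have e2 : cellHi N μ (j-1) + μbar / N = ((j:ℝ) + μ') / N := by
              rw [cellHi_ne N μ (by omega : j - 1 ≠ N), hcast, hμ'']; ring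
            rw [e1, e2] at hc
            rw [cellLo_ne N μ (by omega : j - 1 ≠ 0),
              cellHi_ne N μ (by omega : j - 1 ≠ N), hcast] at hr
            rw [intconst hc le_rfl ((div_le_div_iff_of_pos_right hN0).mpr (by linarith)) le_rfl]
            linear_combination (-1:ℝ) * hr
  · have h1s : (1:ℝ) ≤ 1 + μbar / N := by linarith
    by_cases h1 : μ + μbar < 1
    · obtain ⟨c, hc, hr⟩ := hψc N le_rfl
      have e1 : cellLo N μ N + μbar / N = ((N:ℝ) - 1 + μ + μbar) / N := by
        rw [cellLo_ne N μ (by omega : N ≠ 0)]; ring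
      have e2 : cellHi N μ N + μbar / N = 1 + μbar / N := by rw [cellHi_last]
      rw [e1, e2] at hc
      rw [cellLo_ne N μ (by omega : N ≠ 0), cellHi_last] at hr
      have hlo1 : ((N:ℝ) - 1 + μ + μbar) / N ≤ 1 := by rw [div_le_one hN0]; linarith
      rw [ioi_eq h1s (fun a ha => hψhi a ha) (intintg hc hlo1 h1s le_rfl).1]
      rw [intconst hc hlo1 h1s le_rfl, hout, if_pos h1]
      have h1μ : (1:ℝ) - μ ≠ 0 := ne_of_gt (by linarith)
      have hr' : c * ((1 - μ) / N) = φ N := by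
        rw [← hr, show (1:ℝ) - ((N:ℝ) - 1 + μ) / N = (1 - μ) / N by field_simp; ring]
      rw [← hr']
      field_simp
      ring
    · have hμ'' : μ' = μ + μbar - 1 := by rw [hμ', if_neg h1]
      have h1' : 1 ≤ μ + μbar := not_lt.mp h1
      obtain ⟨c1, hc1, hr1⟩ := hψc (N-1) (by omega)
      obtain ⟨c2, hc2, hr2⟩ := hψc N le_rfl
      have hcast : ((N - 1 : ℕ) : ℝ) = (N:ℝ) - 1 := by
        rw [Nat.cast_sub (by omega), Nat.cast_one]
      have e1 : cellLo N μ (N-1) + μbar / N = ((N:ℝ) - 2 + μ + μbar) / N := by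
        rw [cellLo_ne N μ (by omega : N - 1 ≠ 0), hcast]; ring
      have e2 : cellHi N μ (N-1) + μbar / N = ((N:ℝ) - 1 + μ + μbar) / N := by
        rw [cellHi_ne N μ (by omega : N - 1 ≠ N), hcast]; ring
      rw [e1, e2] at hc1
      have e3 : cellLo N μ N + μbar / N = ((N:ℝ) - 1 + μ + μbar) / N := by
        rw [cellLo_ne N μ (by omega : N ≠ 0)]; ring
      have e4 : cellHi N μ N + μbar / N = 1 + μbar / N := by rw [cellHi_last]
      rw [e3, e4] at hc2
      rw [cellLo_ne N μ (by omega : N - 1 ≠ 0),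
        cellHi_ne N μ (by omega : N - 1 ≠ N), hcast] at hr1
      rw [cellLo_ne N μ (by omega : N ≠ 0), cellHi_last] at hr2
      have hlo1 : ((N:ℝ) - 2 + μ + μbar) / N ≤ 1 := by rw [div_le_one hN0]; linarith
      have h1m : (1:ℝ) ≤ ((N:ℝ) - 1 + μ + μbar) / N := by rw [le_div_iff₀ hN0]; linarith
      have hms : ((N:ℝ) - 1 + μ + μbar) / N ≤ 1 + μbar / N := by
        rw [show (1:ℝ) + μbar / N = ((N:ℝ) + μbar) / N by field_simp]
        exact (div_le_div_iff_of_pos_right hN0).mpr (by linarith)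
      have hint1 : IntervalIntegrable ψ volume 1 (((N:ℝ) - 1 + μ + μbar) / N) :=
        intintg hc1 hlo1 h1m le_rfl
      have hint2 : IntervalIntegrable ψ volume (((N:ℝ) - 1 + μ + μbar) / N) (1 + μbar / N) :=
        intintg hc2 le_rfl hms le_rfl
      rw [ioi_eq h1s (fun a ha => hψhi a ha) (hint1.trans hint2).1]
      rw [← intervalIntegral.integral_add_adjacent_intervals hint1 hint2]
      rw [intconst hc1 hlo1 h1m le_rfl, intconst hc2 le_rfl hms le_rfl]
      rw [hout, if_neg h1]
      have hNN : (N:ℝ) * ((N:ℝ))⁻¹ = 1 := mul_inv_cancel₀ hNR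
      linear_combination (1 - μ - μbar) * hr1 - hr2 - c1 * hNN
end

section
/- The remapping to the reference mesh conserves total mass: for every μ ∈ [0,1] and φ ∈ ℝ^{N+1} (N ≥ 2), the remapped vector φ' satisfies Σ_{j=0}^{N} φ'_j = Σ_{j=0}^{N} φ_j. -/
/-- The remapping to the reference mesh (`φ'_0 = 0`, `φ'_1 = φ_0 + (1−μ)φ_1`,
`φ'_j = (1−μ)φ_j + μφ_{j−1}` for `2 ≤ j ≤ N−1`, `φ'_N = μφ_{N−1} + φ_N`)
conserves total mass. -/
theorem remap_mass_conservation
    (N : ℕ) (hN : 2 ≤ N) (μ : ℝ) (hμ : μ ∈ Set.Icc (0:ℝ) 1) (φ φ' : ℕ → ℝ)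
    (h0 : φ' 0 = 0)
    (h1 : φ' 1 = φ 0 + (1 - μ) * φ 1)
    (hmid : ∀ j, 2 ≤ j → j ≤ N - 1 → φ' j = (1 - μ) * φ j + μ * φ (j - 1))
    (hend : φ' N = μ * φ (N - 1) + φ N) :
    ∑ j ∈ Finset.range (N + 1), φ' j = ∑ j ∈ Finset.range (N + 1), φ j := by
  have split : ∀ f : ℕ → ℝ, ∑ j ∈ Finset.range (N + 1), f j
      = f 0 + f 1 + (∑ j ∈ Finset.Ico 2 N, f j) + f N := by
    intro f
    rw [Finset.range_eq_Ico, Finset.sum_Ico_succ_top (by omega),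
        ← Finset.sum_Ico_consecutive _ (by omega : 0 ≤ 2) (by omega : 2 ≤ N)]
    have h02 : ∑ j ∈ Finset.Ico 0 2, f j = f 0 + f 1 := by
      rw [← Finset.range_eq_Ico]
      simp [Finset.sum_range_succ]
    rw [h02]
  rw [split φ', split φ, h0, h1, hend]
  have hmid' : ∑ j ∈ Finset.Ico 2 N, φ' j
      = (1 - μ) * (∑ j ∈ Finset.Ico 2 N, φ j)
        + μ * (∑ j ∈ Finset.Ico 1 (N - 1), φ j) := by
    have e1 : ∑ j ∈ Finset.Ico 2 N, φ' j
        = ∑ j ∈ Finset.Ico 2 N, ((1 - μ) * φ j + μ * φ (j - 1)) := by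
      apply Finset.sum_congr rfl
      intro j hj
      rw [Finset.mem_Ico] at hj
      exact hmid j hj.1 (by omega)
    rw [e1, Finset.sum_add_distrib, ← Finset.mul_sum, ← Finset.mul_sum]
    congr 1
    congr 1
    rw [Finset.sum_Ico_eq_sum_range, Finset.sum_Ico_eq_sum_range,
        show N - 1 - 1 = N - 2 by omega]
    exact Finset.sum_congr rfl (fun i _ => by congr 1; omega)
  rw [hmid']
  have hshift : (∑ j ∈ Finset.Ico 1 (N - 1), φ j) + φ (N - 1)
      = φ 1 + ∑ j ∈ Finset.Ico 2 N, φ j := by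
    have l : ∑ j ∈ Finset.Ico 1 N, φ j
        = (∑ j ∈ Finset.Ico 1 (N - 1), φ j) + φ (N - 1) := by
      have := Finset.sum_Ico_succ_top (show 1 ≤ N - 1 by omega) φ
      rwa [show N - 1 + 1 = N by omega] at this
    have r : ∑ j ∈ Finset.Ico 1 N, φ j
        = φ 1 + ∑ j ∈ Finset.Ico 2 N, φ j := by
      rw [← Finset.sum_Ico_consecutive _ (by omega : 1 ≤ 2) (by omega : 2 ≤ N)]
      congr 1
      simp
    rw [← l, r]
  linear_combination μ * hshift
end

section
/- The backward-Euler diffusion step preserves nonnegativity: for every integer N ≥ 2, every θ ≥ 0, and every x, ρ ∈ ℝ^{N+1} with Mx = ρ and ρ_j ≥ 0 for all j, one has x_j ≥ 0 for all j. -/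
/-- The `(N+1)×(N+1)` backward-Euler diffusion matrix of the backward-time
central-space scheme for the heat equation with no-diffusive-flux boundary
conditions. -/
noncomputable def diffusionMatrix (N : ℕ) (θ : ℝ) :
    Matrix (Fin (N + 1)) (Fin (N + 1)) ℝ :=
  fun i j =>
    if (i : ℕ) = (j : ℕ) then
      (if (i : ℕ) = 0 ∨ (i : ℕ) = N then 1 + θ else 1 + 2 * θ)
    else if (i : ℕ) + 1 = (j : ℕ) ∨ (j : ℕ) + 1 = (i : ℕ) then -θ
    else 0

/-- Every row of the diffusion matrix sums to `1`. -/
lemma diffusionMatrix_rowSum (N : ℕ) (hN : 2 ≤ N) (θ : ℝ) (i : Fin (N + 1)) :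
    ∑ j, diffusionMatrix N θ i j = 1 := by
  set k := (i : ℕ) with hk
  have hkN : k ≤ N := Nat.lt_succ_iff.mp i.isLt
  have hrw : ∑ j, diffusionMatrix N θ i j
      = ∑ m ∈ Finset.range (N + 1),
          (if k = m then (if k = 0 ∨ k = N then 1 + θ else 1 + 2 * θ)
           else if k + 1 = m ∨ m + 1 = k then -θ else 0) := by
    rw [← Fin.sum_univ_eq_sum_range]
    rfl
  rw [hrw]
  clear_value k
  rcases Nat.eq_zero_or_pos k with h0 | h0
  · have hcong : ∀ m ∈ Finset.range (N + 1),
        (if k = m then (if k = 0 ∨ k = N then 1 + θ else 1 + 2 * θ)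
         else if k + 1 = m ∨ m + 1 = k then -θ else 0)
        = (if m = 0 then 1 + θ else 0) + (if m = 1 then -θ else 0) := by
      intro m hm
      rw [Finset.mem_range] at hm
      split_ifs <;> first | ring1 | (exfalso; omega)
    rw [Finset.sum_congr rfl hcong, Finset.sum_add_distrib,
      Finset.sum_ite_eq' , Finset.sum_ite_eq']
    simp only [Finset.mem_range]
    rw [if_pos (by omega), if_pos (by omega)]
    ring
  rcases eq_or_lt_of_le hkN with hN' | hN'
  · have hcong : ∀ m ∈ Finset.range (N + 1),
        (if k = m then (if k = 0 ∨ k = N then 1 + θ else 1 + 2 * θ)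
         else if k + 1 = m ∨ m + 1 = k then -θ else 0)
        = (if m = N then 1 + θ else 0) + (if m = N - 1 then -θ else 0) := by
      intro m hm
      rw [Finset.mem_range] at hm
      split_ifs <;> first | ring1 | (exfalso; omega)
    rw [Finset.sum_congr rfl hcong, Finset.sum_add_distrib,
      Finset.sum_ite_eq' , Finset.sum_ite_eq']
    simp only [Finset.mem_range]
    rw [if_pos (by omega), if_pos (by omega)]
    ring
  · have hcong : ∀ m ∈ Finset.range (N + 1),
        (if k = m then (if k = 0 ∨ k = N then 1 + θ else 1 + 2 * θ)
         else if k + 1 = m ∨ m + 1 = k then -θ else 0)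
        = (if m = k then 1 + 2 * θ else 0) + (if m = k + 1 then -θ else 0)
          + (if m = k - 1 then -θ else 0) := by
      intro m hm
      rw [Finset.mem_range] at hm
      split_ifs <;> first | ring1 | (exfalso; omega)
    rw [Finset.sum_congr rfl hcong, Finset.sum_add_distrib, Finset.sum_add_distrib,
      Finset.sum_ite_eq', Finset.sum_ite_eq', Finset.sum_ite_eq']
    simp only [Finset.mem_range]
    rw [if_pos (by omega), if_pos (by omega), if_pos (by omega)]
    ring

/-- Off-diagonal entries of the diffusion matrix are nonpositive. -/
lemma diffusionMatrix_offdiag_nonpos (N : ℕ) (θ : ℝ) (hθ : 0 ≤ θ)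
    {i j : Fin (N + 1)} (hij : j ≠ i) : diffusionMatrix N θ i j ≤ 0 := by
  have : (i : ℕ) ≠ (j : ℕ) := fun h => hij (Fin.ext h.symm)
  unfold diffusionMatrix
  rw [if_neg this]
  split_ifs <;> linarith

/-- The backward-Euler diffusion step preserves nonnegativity: if `Mx = ρ`
with `ρ_j ≥ 0` for all `j`, then `x_j ≥ 0` for all `j`. -/
theorem diffusionMatrix_preserves_nonneg (N : ℕ) (hN : 2 ≤ N) (θ : ℝ)
    (hθ : 0 ≤ θ) (x ρ : Fin (N + 1) → ℝ)
    (hxρ : (diffusionMatrix N θ).mulVec x = ρ)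
    (hρ : ∀ j, 0 ≤ ρ j) :
    ∀ j, 0 ≤ x j := by
  obtain ⟨i, -, hi⟩ := Finset.exists_min_image Finset.univ x ⟨0, Finset.mem_univ 0⟩
  have hmin : ∀ j, x i ≤ x j := fun j => hi j (Finset.mem_univ j)
  have h1 : ∑ j, diffusionMatrix N θ i j * x j = ρ i := by
    rw [← hxρ]
    simp [Matrix.mulVec, dotProduct]
  have h2 : x i - ρ i = ∑ j, diffusionMatrix N θ i j * (x i - x j) := by
    rw [← h1]
    have hrs := diffusionMatrix_rowSum N hN θ i
    calc x i - ∑ j, diffusionMatrix N θ i j * x j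
        = (∑ j, diffusionMatrix N θ i j) * x i
          - ∑ j, diffusionMatrix N θ i j * x j := by rw [hrs]; ring
      _ = ∑ j, diffusionMatrix N θ i j * (x i - x j) := by
          rw [Finset.sum_mul, ← Finset.sum_sub_distrib]
          congr 1; funext j; ring
  have h3 : 0 ≤ x i - ρ i := by
    rw [h2]
    apply Finset.sum_nonneg
    intro j _
    by_cases hji : j = i
    · subst hji; simp
    · nlinarith [diffusionMatrix_offdiag_nonpos N θ hθ hji, hmin j]
  intro j
  have := hρ i
  linarith [hmin j]
end

section
/- Fix an integer N ≥ 2 and an integer m ≥ 1. Let (μ̄ⁿ)_{n=1}^{m} ⊂ [0,1) with Σ_{n=1}^{m} μ̄ⁿ ≥ N+1, let μ⁰ = 0 with μⁿ given by the shift-update rule, let d⁰ ∈ ℝ^{N+1} be arbitrary, let dⁿ ∈ ℝ^{N+1} be the state after n applications of the moving-mesh advection update with influx 0 at every step, and let P = Σ_{n=1}^{m} φ_outⁿ be the accumulated outflux over the m steps. Then d^m = 0 and P = Σ_{j=0}^{N} d⁰_j. Consequently, the linear map ℝ^{N+1} → ℝ^{N+2} sending d⁰ to (d^m, P) has image spanned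 by the single vector (0,…,0,1), so its image is one-dimensional (for d⁰ ≠ 0 in the kernel complement) and in particular has dimension at most 1. -/
/-- Shift-update rule: `μ' = μ + μ̄` if `μ + μ̄ < 1`, else `μ' = μ + μ̄ − 1`. -/
noncomputable def shiftUpd (μ μbar : ℝ) : ℝ :=
  if μ + μbar < 1 then μ + μbar else μ + μbar - 1

/-- One step of the moving-mesh advection update (state part) for an
`(N+1)`-cell domain with shift `μ`, relative shift `μ̄`, and influx `φin`. -/
noncomputable def advUpd (N : ℕ) (μ μbar : ℝ) (φ : ℕ → ℝ) (φin : ℝ) : ℕ → ℝ :=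
  fun j =>
    if μ + μbar < 1 then
      if j = 0 then φ 0 + φin
      else if j = N then φ N - (μbar / (1 - μ)) * φ N
      else φ j
    else
      if j = 0 then ((μ + μbar - 1) / μ) * φin
      else if j = 1 then φ 0 + (1 - (μ + μbar - 1) / μ) * φin
      else if j = N then (1 - (μ + μbar - 1)) * φ (N - 1)
      else φ (j - 1)

/-- One step of the moving-mesh advection update (outflux part). -/
noncomputable def advOut (N : ℕ) (μ μbar : ℝ) (φ : ℕ → ℝ) : ℝ :=
  if μ + μbar < 1 then (μbar / (1 - μ)) * φ N
  else (μ + μbar - 1) * φ (N - 1) + φ N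

/-- The shift sequence `μⁿ` with `μ⁰ = 0` driven by relative shifts `μ̄ⁿ`. -/
noncomputable def muSeq (μbar : ℕ → ℝ) : ℕ → ℝ
  | 0 => 0
  | n + 1 => shiftUpd (muSeq μbar n) (μbar (n + 1))

/-- The state `dⁿ` after `n` moving-mesh advection updates with influx `0` at
every step, starting from `d⁰ = d0`. -/
noncomputable def dSeq (N : ℕ) (μbar : ℕ → ℝ) (d0 : ℕ → ℝ) : ℕ → ℕ → ℝ
  | 0 => d0
  | n + 1 => advUpd N (muSeq μbar n) (μbar (n + 1)) (dSeq N μbar d0 n) 0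

/-- The accumulated outflux `P = Σ_{n=1}^{m} φ_outⁿ` over `m` steps. -/
noncomputable def Pacc (N : ℕ) (μbar : ℕ → ℝ) (d0 : ℕ → ℝ) (m : ℕ) : ℝ :=
  ∑ n ∈ Finset.range m, advOut N (muSeq μbar n) (μbar (n + 1)) (dSeq N μbar d0 n)

/-- One-step mass conservation with zero influx. -/
lemma mass_step (N : ℕ) (hN : 2 ≤ N) (μ b : ℝ) (φ : ℕ → ℝ) :
    (∑ j ∈ Finset.range (N + 1), advUpd N μ b φ 0 j) + advOut N μ b φ
      = ∑ j ∈ Finset.range (N + 1), φ j := by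
  obtain ⟨K, rfl⟩ : ∃ K, N = K + 2 := ⟨N - 2, by omega⟩
  by_cases h : μ + b < 1
  · rw [Finset.sum_range_succ, Finset.sum_range_succ (f := φ)]
    have h1 : ∀ j ∈ Finset.range (K + 2), advUpd (K + 2) μ b φ 0 j = φ j := by
      intro j hj
      simp only [Finset.mem_range] at hj
      rcases Nat.eq_zero_or_pos j with rfl | hj0
      · simp [advUpd, h]
      · have : j ≠ 0 := by omega
        have : j ≠ K + 2 := by omega
        simp [advUpd, h, ‹j ≠ 0›, ‹j ≠ K + 2›]
    rw [Finset.sum_congr rfl h1]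
    have h2 : advUpd (K + 2) μ b φ 0 (K + 2) = φ (K + 2) - b / (1 - μ) * φ (K + 2) := by
      simp [advUpd, h]
    rw [h2]
    simp only [advOut, if_pos h]
    ring
  · -- wrap case
    rw [Finset.sum_range_succ' (f := advUpd (K + 2) μ b φ 0), Finset.sum_range_succ]
    have h0 : advUpd (K + 2) μ b φ 0 0 = 0 := by simp [advUpd, h]
    have htop : advUpd (K + 2) μ b φ 0 (K + 2) = (1 - (μ + b - 1)) * φ (K + 1) := by
      have : K + 2 ≠ 1 := by omega
      simp [advUpd, h, this]
    have h1 : ∀ j ∈ Finset.range (K + 1), advUpd (K + 2) μ b φ 0 (j + 1) = φ j := by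
      intro j hj
      simp only [Finset.mem_range] at hj
      rcases Nat.eq_zero_or_pos j with rfl | hj0
      · simp [advUpd, h]
      · have e1 : j + 1 ≠ 1 := by omega
        have e2 : j + 1 ≠ K + 2 := by omega
        simp [advUpd, h, e1, e2, (show j ≠ 0 by omega), (show j ≠ K + 1 by omega)]
    rw [Finset.sum_congr rfl h1, h0, htop]
    have hrhs : ∑ j ∈ Finset.range (K + 2 + 1), φ j
        = (∑ j ∈ Finset.range (K + 1), φ j) + φ (K + 1) + φ (K + 2) := by
      rw [Finset.sum_range_succ, Finset.sum_range_succ]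
    rw [hrhs]
    have hout : advOut (K + 2) μ b φ = (μ + b - 1) * φ (K + 1) + φ (K + 2) := by
      simp [advOut, h]
    rw [hout]; ring

/-- One-step zero propagation with zero influx. -/
lemma zero_step (N : ℕ) (hN : 2 ≤ N) (μ b W : ℝ) (φ : ℕ → ℝ)
    (hz : ∀ j, j ≤ N → (j : ℝ) < W → φ j = 0) :
    ∀ j, j ≤ N → (j : ℝ) < W + (μ + b - shiftUpd μ b) → advUpd N μ b φ 0 j = 0 := by
  intro j hj hw
  by_cases h : μ + b < 1
  · have hW : (j : ℝ) < W := by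
      have : shiftUpd μ b = μ + b := by simp [shiftUpd, h]
      rw [this] at hw; linarith
    rcases Nat.eq_zero_or_pos j with rfl | hj0
    · simp [advUpd, h, hz 0 (by omega) hW]
    · by_cases hjN : j = N
      · have hφ : φ N = 0 := hz N le_rfl (by rw [← hjN]; exact hW)
        simp [advUpd, h, hjN, (show N ≠ 0 by omega), hφ]
      · have e0 : j ≠ 0 := by omega
        simp [advUpd, h, e0, hjN, hz j hj hW]
  · have hW : (j : ℝ) < W + 1 := by
      have : shiftUpd μ b = μ + b - 1 := by simp [shiftUpd, h]
      rw [this] at hw; linarith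
    rcases Nat.eq_zero_or_pos j with rfl | hj0
    · simp [advUpd, h]
    · by_cases hj1 : j = 1
      · have hW1 : (1 : ℝ) < W + 1 := by subst hj1; exact_mod_cast hW
        have h0 : φ 0 = 0 := hz 0 (by omega) (by push_cast; linarith)
        simp [advUpd, h, hj1, h0]
      · by_cases hjN : j = N
        · have hN1 : φ (N - 1) = 0 := by
            apply hz (N - 1) (by omega)
            have hc : ((N - 1 : ℕ) : ℝ) = (N : ℝ) - 1 := by
              have h1 : (1:ℕ) ≤ N := by omega
              push_cast [h1]; ring
            have hNW : (N : ℝ) < W + 1 := by rw [← hjN]; exact hW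
            rw [hc]; linarith
          simp [advUpd, h, hjN, (show N ≠ 0 by omega), (show N ≠ 1 by omega), hN1]
        · have e0 : j ≠ 0 := by omega
          have hprev : φ (j - 1) = 0 := by
            apply hz (j - 1) (by omega)
            have hc : ((j - 1 : ℕ) : ℝ) = (j : ℝ) - 1 := by
              have h1 : (1:ℕ) ≤ j := by omega
              push_cast [h1]; ring
            rw [hc]; linarith
          simp [advUpd, h, e0, hj1, hjN, hprev]

set_option maxHeartbeats 1000000 in
/-- Core of the rank-1 structure proposition: if the relative shifts
`μ̄ⁿ ∈ [0,1)` over `m` steps accumulate to at least `N+1`, then with zero influx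
the final state vanishes, `d^m = 0`, and the accumulated outflux equals the
initial total mass, `P = Σ_j d⁰_j`.  Consequently, the map `d⁰ ↦ (d^m, P)` has
range contained in the span of the single vector `(0,…,0,1)`, so the span of
its range has dimension at most `1`. -/

theorem winter_operator_rank_one
    (N m : ℕ) (hN : 2 ≤ N) (hm : 1 ≤ m) (μbar : ℕ → ℝ)
    (hμbar : ∀ n, 1 ≤ n → n ≤ m → μbar n ∈ Set.Ico (0:ℝ) 1)
    (hsum : (N : ℝ) + 1 ≤ ∑ n ∈ Finset.range m, μbar (n + 1)) :
    (∀ d0 : ℕ → ℝ,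
        (∀ j ≤ N, dSeq N μbar d0 m j = 0) ∧
        Pacc N μbar d0 m = ∑ j ∈ Finset.range (N + 1), d0 j) ∧
    ∀ F : (Fin (N + 1) → ℝ) → (Fin (N + 2) → ℝ),
      (∀ v : Fin (N + 1) → ℝ,
        F v = Fin.snoc
          (fun j : Fin (N + 1) =>
            dSeq N μbar (fun i => if h : i < N + 1 then v ⟨i, h⟩ else 0) m j)
          (Pacc N μbar (fun i => if h : i < N + 1 then v ⟨i, h⟩ else 0) m)) →
      Set.range F ⊆
        ((Submodule.span ℝ {Pi.single (Fin.last (N + 1)) (1:ℝ)} :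
          Submodule ℝ (Fin (N + 2) → ℝ)) : Set (Fin (N + 2) → ℝ)) ∧
      Module.finrank ℝ ↥(Submodule.span ℝ (Set.range F)) ≤ 1 := by
  -- shifts stay in [0,1)
  have hmu : ∀ n, n ≤ m → muSeq μbar n ∈ Set.Ico (0:ℝ) 1 := by
    intro n
    induction n with
    | zero => intro _; simp [muSeq]
    | succ k ih =>
      intro hkm
      have hk := ih (by omega)
      have hb := hμbar (k + 1) (by omega) hkm
      obtain ⟨hk0, hk1⟩ := hk
      obtain ⟨hb0, hb1⟩ := hb
      simp only [muSeq, shiftUpd]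
      by_cases h : muSeq μbar k + μbar (k + 1) < 1
      · rw [if_pos h]; exact ⟨by linarith, h⟩
      · rw [if_neg h]
        push_neg at h
        constructor <;> [linarith; linarith]
  -- main per-d0 statement
  have main : ∀ d0 : ℕ → ℝ,
      (∀ j ≤ N, dSeq N μbar d0 m j = 0) ∧
      Pacc N μbar d0 m = ∑ j ∈ Finset.range (N + 1), d0 j := by
    intro d0
    -- zero invariant
    have hzero : ∀ n, ∀ j, j ≤ N →
        (j : ℝ) < (∑ i ∈ Finset.range n, μbar (i + 1)) - muSeq μbar n →
        dSeq N μbar d0 n j = 0 := by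
      intro n
      induction n with
      | zero =>
        intro j _ hj
        simp [muSeq] at hj
        exact absurd hj (Nat.cast_nonneg j).not_gt
      | succ k ih =>
        intro j hj hw
        have hWrw : (∑ i ∈ Finset.range (k + 1), μbar (i + 1)) - muSeq μbar (k + 1)
            = ((∑ i ∈ Finset.range k, μbar (i + 1)) - muSeq μbar k)
              + (muSeq μbar k + μbar (k + 1) - shiftUpd (muSeq μbar k) (μbar (k + 1))) := by
          rw [Finset.sum_range_succ]
          simp [muSeq]; ring
        rw [hWrw] at hw
        exact zero_step N hN _ _ _ _ ih j hj hw
    -- mass conservation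
    have hmass : ∀ n, (∑ j ∈ Finset.range (N + 1), dSeq N μbar d0 n j) + Pacc N μbar d0 n
        = ∑ j ∈ Finset.range (N + 1), d0 j := by
      intro n
      induction n with
      | zero => simp [Pacc, dSeq]
      | succ k ih =>
        have hP : Pacc N μbar d0 (k + 1)
            = Pacc N μbar d0 k + advOut N (muSeq μbar k) (μbar (k + 1)) (dSeq N μbar d0 k) := by
          simp [Pacc, Finset.sum_range_succ]
        rw [hP]
        have : (∑ j ∈ Finset.range (N + 1), dSeq N μbar d0 (k + 1) j)
            + advOut N (muSeq μbar k) (μbar (k + 1)) (dSeq N μbar d0 k)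
            = ∑ j ∈ Finset.range (N + 1), dSeq N μbar d0 k j := by
          simpa [dSeq] using
            mass_step N hN (muSeq μbar k) (μbar (k + 1)) (dSeq N μbar d0 k)
        linarith
    have hmfinal : ∀ j ≤ N, dSeq N μbar d0 m j = 0 := by
      intro j hj
      apply hzero m j hj
      have hμm := (hmu m le_rfl).2
      have : (j : ℝ) ≤ (N : ℝ) := by exact_mod_cast hj
      linarith
    refine ⟨hmfinal, ?_⟩
    have hsz : (∑ j ∈ Finset.range (N + 1), dSeq N μbar d0 m j) = 0 :=
      Finset.sum_eq_zero fun j hj => hmfinal j (by simp only [Finset.mem_range] at hj; omega)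
    have := hmass m
    rw [hsz] at this
    linarith
  refine ⟨main, ?_⟩
  intro F hF
  have hrange : Set.range F ⊆
      ((Submodule.span ℝ {Pi.single (Fin.last (N + 1)) (1:ℝ)} :
        Submodule ℝ (Fin (N + 2) → ℝ)) : Set (Fin (N + 2) → ℝ)) := by
    rintro _ ⟨v, rfl⟩
    rw [hF v]
    set d0 : ℕ → ℝ := fun i => if h : i < N + 1 then v ⟨i, h⟩ else 0 with hd0
    obtain ⟨hz, _⟩ := main d0
    have heq : (Fin.snoc (fun j : Fin (N + 1) => dSeq N μbar d0 m j)
          (Pacc N μbar d0 m) : Fin (N + 2) → ℝ)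
        = Pacc N μbar d0 m • (Pi.single (Fin.last (N + 1)) (1:ℝ) : Fin (N + 2) → ℝ) := by
      funext i
      refine Fin.lastCases ?_ ?_ i
      · simp [Fin.snoc_last]
      · intro i
        have hne : (Fin.castSucc i : Fin (N + 2)) ≠ Fin.last (N + 1) :=
          (Fin.castSucc_lt_last i).ne
        simp [Fin.snoc_castSucc, Pi.single_eq_of_ne hne,
          hz i.1 (Nat.lt_succ_iff.mp i.isLt)]
    rw [heq]
    exact Submodule.smul_mem _ _ (Submodule.subset_span rfl)
  refine ⟨hrange, ?_⟩
  have key : ∀ (u : Fin (N + 2) → ℝ), u ≠ 0 →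
      Submodule.span ℝ (Set.range F) ≤ Submodule.span ℝ {u} →
      Module.finrank ℝ ↥(Submodule.span ℝ (Set.range F)) ≤ 1 := by
    intro u hu hle
    calc Module.finrank ℝ ↥(Submodule.span ℝ (Set.range F))
        ≤ Module.finrank ℝ ↥(Submodule.span ℝ {u}) := Submodule.finrank_mono hle
      _ ≤ 1 := by rw [finrank_span_singleton hu]
  apply key (Pi.single (Fin.last (N + 1)) (1:ℝ))
  · intro h
    have := congrFun h (Fin.last (N + 1))
    simp at this
  · exact Submodule.span_le.mpr hrange
end
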